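/- Let K be a field. The Sibirsky ideal I_S is a prime ideal of the polynomial ring K[a₁,…,a_ℓ,b_ℓ,…,b₁]. -/

import Mathlib

open MvPolynomial

noncomputable section

/-- Index in `Fin (2*ℓ)` of the coefficient `a_k` (0-indexed position `k`). -/
def aIdx (l : ℕ) (k : Fin l) : Fin (2 * l) :=
  ⟨(k : ℕ), by have := k.isLt; omega⟩

/-- Index in `Fin (2*ℓ)` of the coefficient `b_k` (0-indexed position `2ℓ-1-k`),
    matching the ordering `(a₁,…,a_ℓ, b_ℓ,…,b₁)`. -/
def bIdx (l : ℕ) (k : Fin l) : Fin (2 * l) :=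
  ⟨2 * l - 1 - (k : ℕ), by have := k.isLt; omega⟩

/-- The vector `ζ = (p₁−q₁, …, p_ℓ−q_ℓ, q_ℓ−p_ℓ, …, q₁−p₁)`. -/
def zeta {l : ℕ} (p : Fin l → ℤ) (q : Fin l → ℕ) : Fin (2 * l) → ℤ := fun i =>
  if h : (i : ℕ) < l then p ⟨(i : ℕ), h⟩ - (q ⟨(i : ℕ), h⟩ : ℤ)
  else (q ⟨2 * l - 1 - (i : ℕ), by have := i.isLt; omega⟩ : ℤ) -
    p ⟨2 * l - 1 - (i : ℕ), by have := i.isLt; omega⟩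

/-- Dot product of an integer vector with a vector of natural numbers. -/
def zdot {n : ℕ} (z : Fin n → ℤ) (v : Fin n → ℕ) : ℤ := ∑ i, z i * (v i : ℤ)

/-- Reversal (involution) of a vector: `ν̂ = (ν_{2ℓ}, …, ν₁)`. -/
def revVec {n : ℕ} {α : Type*} (v : Fin n → α) : Fin n → α := fun i => v i.rev

/-- The monomial `[ν] = a₁^{ν₁}⋯a_ℓ^{ν_ℓ}·b_ℓ^{ν_{ℓ+1}}⋯b₁^{ν_{2ℓ}}` in the
    polynomial ring in `2ℓ` variables. -/
def monX {K : Type*} [CommSemiring K] {n : ℕ} (v : Fin n → ℕ) :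
    MvPolynomial (Fin n) K :=
  ∏ i, (X i) ^ (v i)

/-- Time-reversibility of the coefficient vector `x = (a,b)`: there is `γ ≠ 0`
    with `b_k = γ^{p_k−q_k}·a_k` for all `k`. -/
def TimeRev {K : Type*} [Field K] {l : ℕ} (p : Fin l → ℤ) (q : Fin l → ℕ)
    (x : Fin (2 * l) → K) : Prop :=
  ∃ γ : K, γ ≠ 0 ∧ ∀ k : Fin l, x (bIdx l k) = γ ^ (p k - (q k : ℤ)) * x (aIdx l k)

/-- The Sibirsky ideal `I_S = ⟨[ν] − [ν̂] : ν ∈ M⟩`. -/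
def sibirsky (K : Type*) [CommRing K] {l : ℕ} (p : Fin l → ℤ) (q : Fin l → ℕ) :
    Ideal (MvPolynomial (Fin (2 * l)) K) :=
  Ideal.span {f | ∃ v : Fin (2 * l) → ℕ,
    zdot (zeta p q) v = 0 ∧ f = monX v - monX (revVec v)}

/-- The homomorphism `ψ₀ : K[a₁,…,a_ℓ,b_ℓ,…,b₁] → K(γ,t₁,…,t_ℓ)`,
    `a_k ↦ t_k`, `b_k ↦ γ^{p_k−q_k}·t_k`; here `γ` is the image of `X 0` and
    `t_k` the image of `X k.succ` in the fraction field of `K[X₀,…,X_ℓ]`. -/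
def psi0 {K : Type*} [Field K] {l : ℕ} (p : Fin l → ℤ) (q : Fin l → ℕ) :
    MvPolynomial (Fin (2 * l)) K →ₐ[K] FractionRing (MvPolynomial (Fin (l + 1)) K) :=
  aeval fun i =>
    if h : (i : ℕ) < l then
      algebraMap (MvPolynomial (Fin (l + 1)) K)
        (FractionRing (MvPolynomial (Fin (l + 1)) K)) (X (Fin.succ ⟨(i : ℕ), h⟩))
    else
      (algebraMap (MvPolynomial (Fin (l + 1)) K)
          (FractionRing (MvPolynomial (Fin (l + 1)) K)) (X 0)) ^
        (p ⟨2 * l - 1 - (i : ℕ), by have := i.isLt; omega⟩ -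
          (q ⟨2 * l - 1 - (i : ℕ), by have := i.isLt; omega⟩ : ℤ)) *
      algebraMap (MvPolynomial (Fin (l + 1)) K)
        (FractionRing (MvPolynomial (Fin (l + 1)) K))
        (X (Fin.succ ⟨2 * l - 1 - (i : ℕ), by have := i.isLt; omega⟩))

/-- The linear map `U_η`, multiplying the coordinate `a_k` by `η^{q_k−p_k}` and the
    coordinate `b_k` by `η^{p_k−q_k}`. -/
def Ueta {K : Type*} [Field K] {l : ℕ} (p : Fin l → ℤ) (q : Fin l → ℕ) (η : K)
    (x : Fin (2 * l) → K) : Fin (2 * l) → K := fun i =>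
  if h : (i : ℕ) < l then η ^ ((q ⟨(i : ℕ), h⟩ : ℤ) - p ⟨(i : ℕ), h⟩) * x i
  else η ^ (p ⟨2 * l - 1 - (i : ℕ), by have := i.isLt; omega⟩ -
    (q ⟨2 * l - 1 - (i : ℕ), by have := i.isLt; omega⟩ : ℤ)) * x i

/-- The orbit of `x` under the group `{U_η : η ≠ 0}`. -/
def orbitU {K : Type*} [Field K] {l : ℕ} (p : Fin l → ℤ) (q : Fin l → ℕ)
    (x : Fin (2 * l) → K) : Set (Fin (2 * l) → K) :=
  {y | ∃ η : K, η ≠ 0 ∧ y = Ueta p q η x}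


/-! ### Auxiliary development for the proof -/

section Aux

variable {K : Type*} [Field K] {l : ℕ} (p : Fin l → ℤ) (q : Fin l → ℕ)

lemma aIdx_val (k : Fin l) : ((aIdx l k : Fin (2*l)) : ℕ) = (k : ℕ) := rfl

lemma bIdx_val (k : Fin l) : ((bIdx l k : Fin (2*l)) : ℕ) = 2*l - 1 - (k : ℕ) := rfl

lemma aIdx_lt (k : Fin l) : ((aIdx l k : Fin (2*l)) : ℕ) < l := k.isLt

lemma bIdx_not_lt (k : Fin l) : ¬ ((bIdx l k : Fin (2*l)) : ℕ) < l := by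
  have := k.isLt; rw [bIdx_val]; omega

lemma bIdx_val_sub (k : Fin l) : 2*l - 1 - ((bIdx l k : Fin (2*l)) : ℕ) = (k : ℕ) := by
  have := k.isLt; rw [bIdx_val]; omega

lemma rev_aIdx (k : Fin l) : (aIdx l k).rev = bIdx l k := by
  have := k.isLt
  apply Fin.ext
  rw [Fin.val_rev, aIdx_val, bIdx_val]; omega

lemma rev_bIdx (k : Fin l) : (bIdx l k).rev = aIdx l k := by
  rw [← rev_aIdx, Fin.rev_rev]

/-- Every index is either an `aIdx` or a `bIdx`. -/
lemma idx_cases (i : Fin (2*l)) : (∃ k, i = aIdx l k) ∨ (∃ k, i = bIdx l k) := by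
  have hi := i.isLt
  by_cases h : (i : ℕ) < l
  · exact Or.inl ⟨⟨(i:ℕ), h⟩, Fin.ext rfl⟩
  · refine Or.inr ⟨⟨2*l - 1 - (i:ℕ), by omega⟩, Fin.ext ?_⟩
    rw [bIdx_val]; simp; omega

/-- Splitting a sum over `Fin (2*l)` into the `a` and `b` parts. -/
lemma sum_split {M : Type*} [AddCommMonoid M] (f : Fin (2*l) → M) :
    ∑ i, f i = (∑ k : Fin l, f (aIdx l k)) + ∑ k : Fin l, f (bIdx l k) := by
  classical
  let e : Fin l ⊕ Fin l ≃ Fin (2*l) :=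
    ((Equiv.sumCongr (Equiv.refl (Fin l)) (Fin.revPerm)).trans finSumFinEquiv).trans
      (finCongr (two_mul l).symm)
  have h1 : ∀ k : Fin l, e (Sum.inl k) = aIdx l k := by
    intro k; apply Fin.ext; simp [e, aIdx]
  have h2 : ∀ k : Fin l, e (Sum.inr k) = bIdx l k := by
    intro k
    have := k.isLt
    apply Fin.ext
    simp [e, bIdx, Fin.val_rev]
    omega
  calc ∑ i, f i = ∑ s : Fin l ⊕ Fin l, f (e s) := (Equiv.sum_comp e f).symm
    _ = (∑ k : Fin l, f (e (Sum.inl k))) + ∑ k : Fin l, f (e (Sum.inr k)) :=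
        Fintype.sum_sum_type fun s => f (e s)
    _ = _ := by simp only [h1, h2]

/-- The exponent vectors in `ℤ^{l+1}`: `a_k ↦ e_{k+1}`, `b_k ↦ (p_k-q_k)·e_0 + e_{k+1}`. -/
def Wvec : Fin (2*l) → (Fin (l+1) → ℤ) := fun i =>
  if h : (i : ℕ) < l then Pi.single (Fin.succ ⟨(i:ℕ), h⟩) 1
  else Pi.single (0 : Fin (l+1))
      (p ⟨2*l - 1 - (i:ℕ), by have := i.isLt; omega⟩ -
        (q ⟨2*l - 1 - (i:ℕ), by have := i.isLt; omega⟩ : ℤ)) +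
    Pi.single (Fin.succ ⟨2*l - 1 - (i:ℕ), by have := i.isLt; omega⟩) 1

lemma Wvec_aIdx (k : Fin l) : Wvec p q (aIdx l k) = Pi.single (Fin.succ k) 1 := by
  rw [Wvec, dif_pos (aIdx_lt k)]
  rfl

lemma Wvec_bIdx (k : Fin l) :
    Wvec p q (bIdx l k) =
      Pi.single (0 : Fin (l+1)) (p k - (q k : ℤ)) + Pi.single (Fin.succ k) 1 := by
  rw [Wvec, dif_neg (bIdx_not_lt k)]
  have h : (⟨2*l - 1 - ((bIdx l k : Fin (2*l)) : ℕ), by have := k.isLt; rw [bIdx_val]; omega⟩ : Fin l) = k :=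
    Fin.ext (bIdx_val_sub k)
  simp only [h]

/-- The monoid map on exponents. -/
def Phi (v : Fin (2*l) → ℕ) : Fin (l+1) → ℤ := ∑ i, (v i : ℤ) • Wvec p q i

lemma Phi_apply_zero (v : Fin (2*l) → ℕ) :
    Phi p q v 0 = ∑ k : Fin l, (v (bIdx l k) : ℤ) * (p k - (q k : ℤ)) := by
  rw [Phi]
  rw [Finset.sum_apply 0 Finset.univ (fun i => (v i : ℤ) • Wvec p q i)]
  rw [sum_split (fun i => ((v i : ℤ) • Wvec p q i) 0)]
  have h1 : ∀ k : Fin l, ((v (aIdx l k) : ℤ) • Wvec p q (aIdx l k)) 0 = 0 := by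
    intro k
    rw [Wvec_aIdx, Pi.smul_apply, Pi.single_eq_of_ne (Fin.succ_ne_zero k).symm, smul_zero]
  have h2 : ∀ k : Fin l, ((v (bIdx l k) : ℤ) • Wvec p q (bIdx l k)) 0
      = (v (bIdx l k) : ℤ) * (p k - (q k : ℤ)) := by
    intro k
    rw [Wvec_bIdx, Pi.smul_apply, Pi.add_apply, Pi.single_eq_same,
      Pi.single_eq_of_ne (Fin.succ_ne_zero k).symm, add_zero, smul_eq_mul]
  simp only [h1, h2, Finset.sum_const_zero, zero_add]

lemma Phi_apply_succ (v : Fin (2*l) → ℕ) (k : Fin l) :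
    Phi p q v (Fin.succ k) = (v (aIdx l k) : ℤ) + (v (bIdx l k) : ℤ) := by
  classical
  rw [Phi]
  rw [Finset.sum_apply (Fin.succ k) Finset.univ (fun i => (v i : ℤ) • Wvec p q i)]
  rw [sum_split (fun i => ((v i : ℤ) • Wvec p q i) (Fin.succ k))]
  have h1 : ∀ k' : Fin l, ((v (aIdx l k') : ℤ) • Wvec p q (aIdx l k')) (Fin.succ k)
      = if k = k' then (v (aIdx l k') : ℤ) else 0 := by
    intro k'
    rw [Wvec_aIdx, Pi.smul_apply, Pi.single_apply]
    simp [Fin.succ_inj, eq_comm]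
  have h2 : ∀ k' : Fin l, ((v (bIdx l k') : ℤ) • Wvec p q (bIdx l k')) (Fin.succ k)
      = if k = k' then (v (bIdx l k') : ℤ) else 0 := by
    intro k'
    rw [Wvec_bIdx, Pi.smul_apply, Pi.add_apply,
      Pi.single_eq_of_ne (Fin.succ_ne_zero k), Pi.single_apply]
    simp [Fin.succ_inj, eq_comm]
  simp only [h1, h2, Finset.sum_ite_eq Finset.univ k, Finset.mem_univ, if_true]

lemma zeta_aIdx (k : Fin l) : zeta p q (aIdx l k) = p k - (q k : ℤ) := by
  rw [zeta, dif_pos (aIdx_lt k)]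
  rfl

lemma zeta_bIdx (k : Fin l) : zeta p q (bIdx l k) = (q k : ℤ) - p k := by
  rw [zeta, dif_neg (bIdx_not_lt k)]
  have h : (⟨2*l - 1 - ((bIdx l k : Fin (2*l)) : ℕ), by have := k.isLt; rw [bIdx_val]; omega⟩ : Fin l) = k :=
    Fin.ext (bIdx_val_sub k)
  simp only [h]

lemma zdot_split (v : Fin (2*l) → ℕ) :
    zdot (zeta p q) v = (∑ k : Fin l, (p k - (q k : ℤ)) * (v (aIdx l k) : ℤ))
      - ∑ k : Fin l, (p k - (q k : ℤ)) * (v (bIdx l k) : ℤ) := by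
  rw [zdot, sum_split (fun i => zeta p q i * (v i : ℤ)), ← Finset.sum_add_distrib,
    ← Finset.sum_sub_distrib]
  apply Finset.sum_congr rfl
  intro k _
  rw [zeta_aIdx, zeta_bIdx]
  ring

/-- `Φ` is invariant under the reversal of vectors in `M`. -/
lemma Phi_rev (v : Fin (2*l) → ℕ) (hv : zdot (zeta p q) v = 0) :
    Phi p q v = Phi p q (revVec v) := by
  have hrv : ∀ k : Fin l, revVec v (aIdx l k) = v (bIdx l k) := by
    intro k; rw [revVec, rev_aIdx]
  have hrv' : ∀ k : Fin l, revVec v (bIdx l k) = v (aIdx l k) := by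
    intro k; rw [revVec, rev_bIdx]
  funext j
  refine Fin.cases ?_ ?_ j
  · rw [Phi_apply_zero, Phi_apply_zero]
    rw [zdot_split, sub_eq_zero] at hv
    simp only [hrv']
    calc ∑ k : Fin l, (v (bIdx l k) : ℤ) * (p k - (q k : ℤ))
        = ∑ k : Fin l, (p k - (q k : ℤ)) * (v (bIdx l k) : ℤ) := by
          apply Finset.sum_congr rfl; intros; ring
      _ = ∑ k : Fin l, (p k - (q k : ℤ)) * (v (aIdx l k) : ℤ) := hv.symm
      _ = ∑ k : Fin l, (v (aIdx l k) : ℤ) * (p k - (q k : ℤ)) := by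
          apply Finset.sum_congr rfl; intros; ring
  · intro k
    rw [Phi_apply_succ, Phi_apply_succ, hrv, hrv']
    ring

lemma monX_mul_add {n : ℕ} (x y : Fin n → ℕ) :
    monX (K := K) (fun i => x i + y i) = monX x * monX y := by
  rw [monX, monX, monX, ← Finset.prod_mul_distrib]
  apply Finset.prod_congr rfl
  intro i _
  rw [pow_add]

/-- The key combinatorial lemma: a binomial whose exponents have the same `Φ`-value
lies in the Sibirsky ideal. -/
lemma binomial_mem (u v : Fin (2*l) → ℕ) (h : Phi p q u = Phi p q v) :
    monX (K := K) u - monX v ∈ sibirsky K p q := by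
  classical
  have hS : ∀ k : Fin l, (u (aIdx l k) : ℤ) + u (bIdx l k)
      = (v (aIdx l k) : ℤ) + v (bIdx l k) := by
    intro k
    have := congrFun h (Fin.succ k)
    rw [Phi_apply_succ, Phi_apply_succ] at this
    exact this
  have hE : ∑ k : Fin l, (u (bIdx l k) : ℤ) * (p k - (q k : ℤ))
      = ∑ k : Fin l, (v (bIdx l k) : ℤ) * (p k - (q k : ℤ)) := by
    have := congrFun h 0
    rw [Phi_apply_zero, Phi_apply_zero] at this
    exact this
  -- the move vector
  set c : Fin l → ℤ := fun k => (u (aIdx l k) : ℤ) - v (aIdx l k) with hc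
  have hca : ∀ k, c k = (u (aIdx l k) : ℤ) - v (aIdx l k) := fun k => rfl
  have hcb : ∀ k, c k = (v (bIdx l k) : ℤ) - u (bIdx l k) := by
    intro k; have := hS k; have := hca k; omega
  let α : Fin (2*l) → ℕ := fun i =>
    if h : (i : ℕ) < l then (c ⟨(i:ℕ), h⟩).toNat
    else (-(c ⟨2*l - 1 - (i:ℕ), by have := i.isLt; omega⟩)).toNat
  have hα_a : ∀ k : Fin l, α (aIdx l k) = (c k).toNat := by
    intro k
    show dite _ _ _ = _
    rw [dif_pos (aIdx_lt k)]
    rfl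
  have hα_b : ∀ k : Fin l, α (bIdx l k) = (-(c k)).toNat := by
    intro k
    show dite _ _ _ = _
    rw [dif_neg (bIdx_not_lt k)]
    have h : (⟨2*l - 1 - ((bIdx l k : Fin (2*l)) : ℕ), by have := k.isLt; rw [bIdx_val]; omega⟩ : Fin l) = k :=
      Fin.ext (bIdx_val_sub k)
    simp only [h]
  let τ : Fin (2*l) → ℕ := fun i => u i - α i
  have hrevα_a : ∀ k : Fin l, revVec α (aIdx l k) = (-(c k)).toNat := by
    intro k; rw [revVec, rev_aIdx, hα_b]
  have hrevα_b : ∀ k : Fin l, revVec α (bIdx l k) = (c k).toNat := by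
    intro k; rw [revVec, rev_bIdx, hα_a]
  -- u = α + τ
  have hu : u = fun i => α i + τ i := by
    funext i
    rcases idx_cases i with ⟨k, rfl⟩ | ⟨k, rfl⟩
    · show u _ = α _ + (u _ - α _)
      rw [hα_a]
      have h2 := hca k
      omega
    · show u _ = α _ + (u _ - α _)
      rw [hα_b]
      have h2 := hcb k
      omega
  -- v = revVec α + τ
  have hv : v = fun i => revVec α i + τ i := by
    funext i
    rcases idx_cases i with ⟨k, rfl⟩ | ⟨k, rfl⟩
    · show v _ = revVec α _ + (u _ - α _)
      rw [hrevα_a, hα_a]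
      have h2 := hca k
      omega
    · show v _ = revVec α _ + (u _ - α _)
      rw [hrevα_b, hα_b]
      have h2 := hcb k
      omega
  -- α ∈ M
  have hαM : zdot (zeta p q) α = 0 := by
    rw [zdot_split]
    have : ∀ k : Fin l, (p k - (q k : ℤ)) * (α (aIdx l k) : ℤ)
        - (p k - (q k : ℤ)) * (α (bIdx l k) : ℤ) = (p k - (q k : ℤ)) * c k := by
      intro k
      rw [hα_a, hα_b]
      have h3 : ((c k).toNat : ℤ) - ((-(c k)).toNat : ℤ) = c k := by omega
      rw [← mul_sub, h3]
    rw [← Finset.sum_sub_distrib]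
    simp only [this]
    have h4 : ∀ k : Fin l, (p k - (q k : ℤ)) * c k
        = (v (bIdx l k) : ℤ) * (p k - (q k : ℤ)) - (u (bIdx l k) : ℤ) * (p k - (q k : ℤ)) := by
      intro k; rw [hcb]; ring
    simp only [h4]
    rw [Finset.sum_sub_distrib, hE, sub_self]
  -- conclude
  have hfactor : monX (K := K) u - monX v
      = monX τ * (monX α - monX (revVec α)) := by
    rw [mul_sub]
    rw [hu, hv, monX_mul_add, monX_mul_add]
    ring
  rw [hfactor]
  apply Ideal.mul_mem_left
  apply Ideal.subset_span
  exact ⟨α, hαM, rfl⟩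

/-! ### The algebra map to a Laurent polynomial ring -/

/-- The algebra map `K[a,b] → K[γ^{±1}, t^{±1}]`. -/
def theta : MvPolynomial (Fin (2*l)) K →ₐ[K] AddMonoidAlgebra K (Fin (l+1) → ℤ) :=
  aeval fun i => AddMonoidAlgebra.single (Wvec p q i) 1

lemma prod_single {G : Type*} [AddCommMonoid G] {ι : Type*} (s : Finset ι) (w : ι → G) :
    (∏ i ∈ s, AddMonoidAlgebra.single (w i) (1 : K))
      = AddMonoidAlgebra.single (∑ i ∈ s, w i) 1 := by
  classical
  induction s using Finset.cons_induction with
  | empty => simp [AddMonoidAlgebra.one_def]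
  | cons a s ha ih =>
    rw [Finset.prod_cons, ih, AddMonoidAlgebra.single_mul_single, Finset.sum_cons, one_mul]

lemma theta_monX (v : Fin (2*l) → ℕ) :
    theta p q (monX (K := K) v) = AddMonoidAlgebra.single (Phi p q v) 1 := by
  rw [monX, map_prod]
  have : ∀ i : Fin (2*l), theta p q ((X i : MvPolynomial (Fin (2*l)) K) ^ (v i))
      = AddMonoidAlgebra.single ((v i : ℤ) • Wvec p q i) 1 := by
    intro i
    rw [map_pow, theta, aeval_X, AddMonoidAlgebra.single_pow, one_pow,
      natCast_zsmul]
  simp only [this]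
  rw [prod_single, Phi]

lemma theta_monomial (d : Fin (2*l) →₀ ℕ) (cc : K) :
    theta p q (monomial d cc) = AddMonoidAlgebra.single (Phi p q ⇑d) cc := by
  classical
  have h1 : monX (K := K) ⇑d = monomial d 1 := by
    rw [monX, ← MvPolynomial.prod_X_pow_eq_monomial]
    rw [Finset.prod_subset (Finset.subset_univ d.support)]
    intro x _ hx
    rw [Finsupp.notMem_support_iff.mp hx, pow_zero]
  have h2 : (monomial d) cc = cc • monomial d 1 := by
    rw [MvPolynomial.smul_monomial, smul_eq_mul, mul_one]
  rw [h2, map_smul, ← h1, theta_monX]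
  rw [AddMonoidAlgebra.smul_single', mul_one]

/-- The Sibirsky ideal is contained in the kernel of `θ`. -/
lemma sib_le_ker : sibirsky K p q ≤ RingHom.ker (theta p q (K := K)) := by
  rw [sibirsky, Ideal.span_le]
  rintro f ⟨v, hv, rfl⟩
  rw [SetLike.mem_coe, RingHom.mem_ker, map_sub, theta_monX, theta_monX,
    Phi_rev p q v hv, sub_self]

lemma theta_apply_eval (f : MvPolynomial (Fin (2*l)) K) (w : Fin (l+1) → ℤ) :
    (theta p q f).coeff w = ∑ d ∈ f.support, if Phi p q ⇑d = w then f.coeff d else 0 := by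
  classical
  conv_lhs => rw [f.as_sum, map_sum]
  rw [AddMonoidAlgebra.coeff_sum, Finsupp.finset_sum_apply]
  apply Finset.sum_congr rfl
  intro d _
  rw [theta_monomial, AddMonoidAlgebra.coeff_single, Finsupp.single_apply]

/-- The kernel of `θ` is contained in the Sibirsky ideal. -/
lemma ker_le_sib : ∀ (n : ℕ) (f : MvPolynomial (Fin (2*l)) K),
    f.support.card ≤ n → theta p q f = 0 → f ∈ sibirsky K p q := by
  classical
  intro n
  induction n with
  | zero =>
    intro f hf _
    have h1 : f.support = ∅ := Finset.card_eq_zero.mp (Nat.le_zero.mp hf)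
    rw [MvPolynomial.support_eq_empty.mp h1]
    exact Ideal.zero_mem _
  | succ n ih =>
    intro f hf hker
    by_cases h0 : f = 0
    · rw [h0]; exact Ideal.zero_mem _
    obtain ⟨d₀, hd₀⟩ := (MvPolynomial.support_nonempty.mpr h0)
    set T : Finset (Fin (2*l) →₀ ℕ) :=
      f.support.filter (fun d => Phi p q ⇑d = Phi p q ⇑d₀) with hT
    have hd₀T : d₀ ∈ T := by
      rw [hT, Finset.mem_filter]; exact ⟨hd₀, rfl⟩
    have hsum : ∑ d ∈ T, f.coeff d = 0 := by
      have h5 := theta_apply_eval p q f (Phi p q ⇑d₀)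
      rw [hker] at h5
      rw [hT, Finset.sum_filter, ← h5]
      rfl
    set h : MvPolynomial (Fin (2*l)) K :=
      ∑ d ∈ T, MvPolynomial.C (f.coeff d) * (monX ⇑d - monX ⇑d₀) with hh
    have hmem : h ∈ sibirsky K p q := by
      apply Ideal.sum_mem
      intro d hd
      apply Ideal.mul_mem_left
      apply binomial_mem
      rw [hT] at hd
      exact (Finset.mem_filter.mp hd).2
    -- h as a sum of monomials
    have hmonX : ∀ d : Fin (2*l) →₀ ℕ, monX (K := K) ⇑d = monomial d 1 := by
      intro d
      rw [monX, ← MvPolynomial.prod_X_pow_eq_monomial]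
      rw [Finset.prod_subset (Finset.subset_univ d.support)]
      intro x _ hx
      rw [Finsupp.notMem_support_iff.mp hx, pow_zero]
    have hh2 : h = ∑ d ∈ T, monomial d (f.coeff d) := by
      rw [hh]
      have : ∀ d ∈ T, MvPolynomial.C (f.coeff d) * (monX (K := K) ⇑d - monX ⇑d₀)
          = monomial d (f.coeff d) - MvPolynomial.C (f.coeff d) * monomial d₀ 1 := by
        intro d _
        rw [mul_sub, hmonX, hmonX, MvPolynomial.C_mul_monomial, mul_one]
      rw [Finset.sum_congr rfl this, Finset.sum_sub_distrib, ← Finset.sum_mul,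
        ← map_sum, hsum, map_zero, zero_mul, sub_zero]
    have hcoeff_h : ∀ d, h.coeff d = if d ∈ T then f.coeff d else 0 := by
      intro d
      rw [hh2, MvPolynomial.coeff_sum]
      simp only [MvPolynomial.coeff_monomial]
      rw [Finset.sum_ite_eq' T d (fun d' => f.coeff d')]
    -- f - h
    have hsub_supp : (f - h).support ⊆ f.support \ T := by
      intro d hd
      rw [MvPolynomial.mem_support_iff, MvPolynomial.coeff_sub, hcoeff_h] at hd
      rw [Finset.mem_sdiff]
      by_cases hdT : d ∈ T
      · rw [if_pos hdT, sub_self] at hd; exact absurd rfl hd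
      · rw [if_neg hdT, sub_zero] at hd
        exact ⟨MvPolynomial.mem_support_iff.mpr hd, hdT⟩
    have hcard : (f - h).support.card ≤ n := by
      have h6 : T ⊆ f.support := Finset.filter_subset _ _
      have h7 : (f.support \ T).card = f.support.card - T.card := Finset.card_sdiff_of_subset h6
      have h8 : 1 ≤ T.card := Finset.card_pos.mpr ⟨d₀, hd₀T⟩
      have h9 := Finset.card_le_card hsub_supp
      omega
    have hker' : theta p q (f - h) = 0 := by
      rw [map_sub, hker, zero_sub, neg_eq_zero]
      exact sib_le_ker p q hmem
    have := ih (f - h) hcard hker'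
    have : f = (f - h) + h := by ring
    rw [this]
    exact Ideal.add_mem _ (ih (f - h) hcard hker') hmem

lemma sib_eq_ker : sibirsky K p q = RingHom.ker (theta p q (K := K)) := by
  apply le_antisymm (sib_le_ker p q)
  intro f hf
  exact ker_le_sib p q f.support.card f le_rfl hf

end Aux

theorem stmt6 {K : Type*} [Field K] {l : ℕ} (hl : 0 < l) (p : Fin l → ℤ) (q : Fin l → ℕ)
    (hp : ∀ k, -1 ≤ p k) (hpq : ∀ k, 0 ≤ p k + (q k : ℤ))
    (hdist : Function.Injective fun k => (p k, q k)) :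
    (sibirsky K p q).IsPrime := by
  haveI : IsDomain (AddMonoidAlgebra K (Fin (l+1) → ℤ)) :=
    NoZeroDivisors.to_isDomain _
  rw [sib_eq_ker p q]
  exact RingHom.ker_isPrime _
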